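/- arXiv:0712.4224 — 6 statements merged into one kernel-verified Lean document; each statement's English description precedes it below -/
import Mathlib

section
/- For any pairwise-type comparison process with odd comparison function f (the difference of reproductive fitnesses being f applied to the payoff difference) and with Φ_A + Φ_B = 1, the average drift in the Battle of the Sexes equals the neutral-evolution drift 1/(18N²), independent of the selection strength w. -/
/-- For any pairwise comparison process with odd comparison function f
(so Φ_A - Φ_B = f(π_A - π_B)) and Φ_A + Φ_B = 1 in each population, the average drift
in the Battle of the Sexes equals the neutral drift 1/(18N²), independent of f. -/
theorem pairwise_drift_eq_neutral (f : ℝ → ℝ) (hf : ∀ t : ℝ, f (-t) = - f t)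
    (N : ℝ) (hN : 0 < N) :
    (1 / N) * (∫ x in (0:ℝ)..1, ∫ y in (0:ℝ)..1,
        x * (1 - x) * y * (1 - y) *
          ((2 * x - 1) * f (2 * (2 * y - 1)) + (2 * y - 1) * f (-2 * (2 * x - 1))))
    + (1 / N ^ 2) * (∫ x in (0:ℝ)..1, ∫ y in (0:ℝ)..1,
        x * (1 - x) * y * (1 - y) * 2)
    = 1 / (18 * N ^ 2) := by
  have hinner : ∀ x : ℝ, (∫ y in (0:ℝ)..1,
      x * (1 - x) * y * (1 - y) *
        ((2 * x - 1) * f (2 * (2 * y - 1)) + (2 * y - 1) * f (-2 * (2 * x - 1)))) = 0 := by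
    intro x
    set F : ℝ → ℝ := fun y => x * (1 - x) * y * (1 - y) *
        ((2 * x - 1) * f (2 * (2 * y - 1)) + (2 * y - 1) * f (-2 * (2 * x - 1))) with hF
    have h1 : (∫ y in (0:ℝ)..1, F (1 - y)) = ∫ y in (0:ℝ)..1, F y := by
      rw [intervalIntegral.integral_comp_sub_left F 1]
      norm_num
    have h2 : ∀ y : ℝ, F (1 - y) = - F y := by
      intro y
      have e1 : (2 * (2 * (1 - y) - 1)) = -(2 * (2 * y - 1)) := by ring
      simp only [hF, e1, hf]
      ring
    have h3 : (∫ y in (0:ℝ)..1, F (1 - y)) = - ∫ y in (0:ℝ)..1, F y := by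
      simp only [h2, intervalIntegral.integral_neg]
    have := h1.symm.trans h3
    linarith
  have hinner2 : ∀ x : ℝ, (∫ y in (0:ℝ)..1, x * (1 - x) * y * (1 - y) * 2)
      = x * (1 - x) * (1 / 3) := by
    intro x
    have : (∫ y in (0:ℝ)..1, x * (1 - x) * y * (1 - y) * 2)
        = ∫ y in (0:ℝ)..1, (2 * (x * (1 - x))) * (y - y ^ 2) := by
      apply intervalIntegral.integral_congr
      intro y _
      ring
    rw [this, intervalIntegral.integral_const_mul,
      intervalIntegral.integral_sub intervalIntegral.intervalIntegrable_id
        (intervalIntegral.intervalIntegrable_pow 2)]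
    simp [integral_pow, integral_id]
    ring
  simp only [hinner, hinner2, intervalIntegral.integral_zero, mul_zero, zero_add]
  have : (∫ x in (0:ℝ)..1, x * (1 - x) * (1 / 3))
      = ∫ x in (0:ℝ)..1, (1 / 3 : ℝ) * (x - x ^ 2) := by
    apply intervalIntegral.integral_congr
    intro x _
    ring
  rw [this, intervalIntegral.integral_const_mul,
    intervalIntegral.integral_sub intervalIntegral.intervalIntegrable_id
      (intervalIntegral.intervalIntegrable_pow 2)]
  simp [integral_pow, integral_id]
  field_simp
  exact Or.inl (by norm_num)
end

section
/- For the linearized Moran process in the Battle of the Sexes, the average drift equals 1/(18N²) for all selection strengths w, i.e. the order-1/N term vanishes and the diffusion term is unaffected by the game. -/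
/-- For the linearized Moran process Φ_s = ½(1 + w(π_s − ⟨π⟩)) in the Battle of the Sexes,
the average drift equals 1/(18N²) for all selection strengths w. -/
theorem linearized_moran_drift (w N : ℝ) (hN : 0 < N) :
    (1 / N) * (∫ x in (0:ℝ)..1, ∫ y in (0:ℝ)..1,
        x * (1 - x) * y * (1 - y) *
          ((2 * x - 1) *
              ((1 + w * ((2 * y - 1) - (2 * x - 1) * (2 * y - 1))) / 2
                - (1 + w * ((1 - 2 * y) - (2 * x - 1) * (2 * y - 1))) / 2)
            + (2 * y - 1) *
              ((1 + w * ((1 - 2 * x) - (-((2 * x - 1) * (2 * y - 1))))) / 2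
                - (1 + w * ((2 * x - 1) - (-((2 * x - 1) * (2 * y - 1))))) / 2)))
    + (1 / N ^ 2) * (∫ x in (0:ℝ)..1, ∫ y in (0:ℝ)..1,
        x * (1 - x) * y * (1 - y) *
          ((1 + w * ((2 * y - 1) - (2 * x - 1) * (2 * y - 1))) / 2
            + (1 + w * ((1 - 2 * y) - (2 * x - 1) * (2 * y - 1))) / 2
            + (1 + w * ((1 - 2 * x) - (-((2 * x - 1) * (2 * y - 1))))) / 2
            + (1 + w * ((2 * x - 1) - (-((2 * x - 1) * (2 * y - 1))))) / 2))
    = 1 / (18 * N ^ 2) := by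
  have h1 : (∫ x in (0:ℝ)..1, ∫ y in (0:ℝ)..1,
        x * (1 - x) * y * (1 - y) *
          ((2 * x - 1) *
              ((1 + w * ((2 * y - 1) - (2 * x - 1) * (2 * y - 1))) / 2
                - (1 + w * ((1 - 2 * y) - (2 * x - 1) * (2 * y - 1))) / 2)
            + (2 * y - 1) *
              ((1 + w * ((1 - 2 * x) - (-((2 * x - 1) * (2 * y - 1))))) / 2
                - (1 + w * ((2 * x - 1) - (-((2 * x - 1) * (2 * y - 1))))) / 2))) = 0 := by
    have : ∀ x y : ℝ, x * (1 - x) * y * (1 - y) *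
          ((2 * x - 1) *
              ((1 + w * ((2 * y - 1) - (2 * x - 1) * (2 * y - 1))) / 2
                - (1 + w * ((1 - 2 * y) - (2 * x - 1) * (2 * y - 1))) / 2)
            + (2 * y - 1) *
              ((1 + w * ((1 - 2 * x) - (-((2 * x - 1) * (2 * y - 1))))) / 2
                - (1 + w * ((2 * x - 1) - (-((2 * x - 1) * (2 * y - 1))))) / 2)) = 0 := by
      intro x y; ring
    simp only [this, intervalIntegral.integral_zero]
  have h2 : (∫ x in (0:ℝ)..1, ∫ y in (0:ℝ)..1,
        x * (1 - x) * y * (1 - y) *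
          ((1 + w * ((2 * y - 1) - (2 * x - 1) * (2 * y - 1))) / 2
            + (1 + w * ((1 - 2 * y) - (2 * x - 1) * (2 * y - 1))) / 2
            + (1 + w * ((1 - 2 * x) - (-((2 * x - 1) * (2 * y - 1))))) / 2
            + (1 + w * ((2 * x - 1) - (-((2 * x - 1) * (2 * y - 1))))) / 2)) = 1 / 18 := by
    have key : ∀ x y : ℝ, x * (1 - x) * y * (1 - y) *
          ((1 + w * ((2 * y - 1) - (2 * x - 1) * (2 * y - 1))) / 2
            + (1 + w * ((1 - 2 * y) - (2 * x - 1) * (2 * y - 1))) / 2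
            + (1 + w * ((1 - 2 * x) - (-((2 * x - 1) * (2 * y - 1))))) / 2
            + (1 + w * ((2 * x - 1) - (-((2 * x - 1) * (2 * y - 1))))) / 2)
        = (x * (1 - x)) * (2 * (y - y ^ 2)) := by
      intro x y; ring
    simp only [key]
    have hy : ∀ x : ℝ, (∫ y in (0:ℝ)..1, (x * (1 - x)) * (2 * (y - y ^ 2)))
        = (x - x ^ 2) * (1 / 3) := by
      intro x
      rw [intervalIntegral.integral_const_mul]
      rw [intervalIntegral.integral_const_mul]
      rw [intervalIntegral.integral_sub intervalIntegral.intervalIntegrable_id (intervalIntegral.intervalIntegrable_pow 2)]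
      simp [integral_id, integral_pow]
      ring
    simp only [hy]
    rw [intervalIntegral.integral_mul_const]
    rw [intervalIntegral.integral_sub intervalIntegral.intervalIntegrable_id (intervalIntegral.intervalIntegrable_pow 2)]
    simp [integral_id, integral_pow]
    norm_num
  rw [h1, h2]
  field_simp
  ring
end

section
/- For the frequency-dependent Moran process in the Battle of the Sexes, (2x-1)(Φ_A^♂-Φ_B^♂) + (2y-1)(Φ_A^♀-Φ_B^♀) = -2w²⟨π^♂⟩(2x-1)(2y-1)/((1-w)² - w²⟨π^♂⟩²) = -2w²(2x-1)²(2y-1)²/((1-w)² - w²(2x-1)²(2y-1)²), which is ≤ 0 on [0,1]² when 0 < w < 1/2. -/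
theorem moran_aux (w p a b : ℝ) (hd1 : 0 < 1 - w + w * p)
    (hd2 : 0 < 1 - w + w * (-p)) (hd3 : 0 < (1 - w) ^ 2 - w ^ 2 * p ^ 2)
    (hab : a * b = p) :
    (a * ((1 - w + w * b) / (2 * (1 - w + w * p))
          - (1 - w + w * (-b)) / (2 * (1 - w + w * p)))
      + b * ((1 - w + w * (-a)) / (2 * (1 - w + w * (-p)))
          - (1 - w + w * a) / (2 * (1 - w + w * (-p)))))
      = -(2 * w ^ 2 * p * p) / ((1 - w) ^ 2 - w ^ 2 * p ^ 2) := by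
  have h1 : (2:ℝ) * (1 - w + w * p) ≠ 0 := by positivity
  have h2 : (2:ℝ) * (1 - w + w * (-p)) ≠ 0 := by positivity
  rw [div_sub_div_same, div_sub_div_same, mul_div_assoc', mul_div_assoc',
    div_add_div _ _ h1 h2, div_eq_div_iff (mul_ne_zero h1 h2) hd3.ne']
  linear_combination (-8 * w ^ 2 * p * ((1 - w) ^ 2 - w ^ 2 * p ^ 2)) * hab

/-- For the frequency-dependent Moran process, the order-1/N integrand satisfies
(2x-1)(Φ_A^♂−Φ_B^♂)+(2y-1)(Φ_A^♀−Φ_B^♀)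
 = −2w²⟨π^♂⟩(2x-1)(2y-1)/((1−w)²−w²⟨π^♂⟩²)
 = −2w²(2x-1)²(2y-1)²/((1−w)²−w²(2x-1)²(2y-1)²) ≤ 0 on [0,1]² for 0 < w < 1/2. -/
theorem moran_phi_diff (w x y : ℝ) (hw0 : 0 < w) (hw : w < 1 / 2)
    (hx : x ∈ Set.Icc (0:ℝ) 1) (hy : y ∈ Set.Icc (0:ℝ) 1) :
    ((2 * x - 1) *
        ((1 - w + w * (2 * y - 1)) / (2 * (1 - w + w * ((2 * x - 1) * (2 * y - 1))))
          - (1 - w + w * (1 - 2 * y)) / (2 * (1 - w + w * ((2 * x - 1) * (2 * y - 1)))))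
      + (2 * y - 1) *
        ((1 - w + w * (1 - 2 * x)) / (2 * (1 - w + w * (-((2 * x - 1) * (2 * y - 1)))))
          - (1 - w + w * (2 * x - 1)) / (2 * (1 - w + w * (-((2 * x - 1) * (2 * y - 1)))))))
      = -(2 * w ^ 2 * ((2 * x - 1) * (2 * y - 1)) * ((2 * x - 1) * (2 * y - 1)))
          / ((1 - w) ^ 2 - w ^ 2 * ((2 * x - 1) * (2 * y - 1)) ^ 2) ∧
    -(2 * w ^ 2 * ((2 * x - 1) * (2 * y - 1)) * ((2 * x - 1) * (2 * y - 1)))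
        / ((1 - w) ^ 2 - w ^ 2 * ((2 * x - 1) * (2 * y - 1)) ^ 2)
      = -(2 * w ^ 2 * (2 * x - 1) ^ 2 * (2 * y - 1) ^ 2)
          / ((1 - w) ^ 2 - w ^ 2 * (2 * x - 1) ^ 2 * (2 * y - 1) ^ 2) ∧
    -(2 * w ^ 2 * (2 * x - 1) ^ 2 * (2 * y - 1) ^ 2)
        / ((1 - w) ^ 2 - w ^ 2 * (2 * x - 1) ^ 2 * (2 * y - 1) ^ 2) ≤ 0 := by
  obtain ⟨hx0, hx1⟩ := hx
  obtain ⟨hy0, hy1⟩ := hy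
  have hp1 : -1 ≤ (2 * x - 1) * (2 * y - 1) := by nlinarith
  have hp2 : (2 * x - 1) * (2 * y - 1) ≤ 1 := by nlinarith
  have hd1 : 0 < 1 - w + w * ((2 * x - 1) * (2 * y - 1)) := by nlinarith
  have hd2 : 0 < 1 - w + w * (-((2 * x - 1) * (2 * y - 1))) := by nlinarith
  have hd3 : 0 < (1 - w) ^ 2 - w ^ 2 * ((2 * x - 1) * (2 * y - 1)) ^ 2 := by nlinarith
  have hd4 : 0 < (1 - w) ^ 2 - w ^ 2 * (2 * x - 1) ^ 2 * (2 * y - 1) ^ 2 := by nlinarith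
  refine ⟨?_, ?_, ?_⟩
  · have := moran_aux w ((2 * x - 1) * (2 * y - 1)) (2 * x - 1) (2 * y - 1)
      hd1 hd2 hd3 rfl
    convert this using 3 <;> ring
  · rw [div_eq_div_iff hd3.ne' hd4.ne']
    ring
  · apply div_nonpos_of_nonpos_of_nonneg
    · have h : 0 ≤ 2 * w ^ 2 * (2 * x - 1) ^ 2 * (2 * y - 1) ^ 2 := by positivity
      linarith
    · exact hd4.le
end

section
/- For the frequency-dependent Moran process with 0 < w < 1/2, the exact average drift is ⟨ΔH⟩ = (2/N²)∫₀¹∫₀¹ x(1-x)y(1-y)·[(1-w)² - Nw²(2x-1)²(2y-1)²]/[(1-w)² - w²(2x-1)²(2y-1)²] dx dy. -/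
set_option maxHeartbeats 1600000

noncomputable def pj (t : ℝ) : ℝ := max 0 (min 1 t)

@[fun_prop] lemma pj_cont : Continuous pj :=
  continuous_const.max (continuous_const.min continuous_id)

lemma pj_nonneg (t : ℝ) : 0 ≤ pj t := le_max_left _ _
lemma pj_le_one (t : ℝ) : pj t ≤ 1 := max_le (by norm_num) (min_le_left _ _)

lemma pj_eq {t : ℝ} (h : t ∈ Set.Icc (0:ℝ) 1) : pj t = t := by
  unfold pj
  rw [min_eq_right h.2, max_eq_right h.1]

noncomputable def Ew (w x y : ℝ) : ℝ :=
  (1 - w) ^ 2 - w ^ 2 * (2 * pj x - 1) ^ 2 * (2 * pj y - 1) ^ 2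

noncomputable def Qf (w x y : ℝ) : ℝ :=
  pj x * (1 - pj x) * pj y * (1 - pj y) * ((2 * pj x - 1) ^ 2 * (2 * pj y - 1) ^ 2) / Ew w x y

noncomputable def Rf (w x y : ℝ) : ℝ :=
  pj x * (1 - pj x) * pj y * (1 - pj y) / Ew w x y

lemma sq_2t1_le_one {t : ℝ} (h0 : 0 ≤ t) (h1 : t ≤ 1) : (2 * t - 1) ^ 2 ≤ 1 := by nlinarith

lemma Ew_pos {w : ℝ} (hw0 : 0 < w) (hw : w < 1 / 2) (x y : ℝ) : 0 < Ew w x y := by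
  have hx2 := sq_2t1_le_one (pj_nonneg x) (pj_le_one x)
  have hy2 := sq_2t1_le_one (pj_nonneg y) (pj_le_one y)
  have h2y : (0:ℝ) ≤ (2 * pj y - 1) ^ 2 := sq_nonneg _
  unfold Ew
  nlinarith [sq_nonneg w, mul_le_one₀ hx2 h2y hy2]

lemma D_pos {w t : ℝ} (hw0 : 0 < w) (hw : w < 1 / 2) (ht : t ^ 2 ≤ 1) :
    0 < 1 - w + w * t := by
  nlinarith [sq_nonneg (t + 1), sq_nonneg (t - 1)]

lemma Qf_cont {w : ℝ} (hw0 : 0 < w) (hw : w < 1 / 2) :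
    Continuous (Function.uncurry fun x y => Qf w x y) := by
  unfold Qf Ew Function.uncurry
  fun_prop (disch := intro p; exact (Ew_pos hw0 hw p.1 p.2).ne')

lemma Rf_cont {w : ℝ} (hw0 : 0 < w) (hw : w < 1 / 2) :
    Continuous (Function.uncurry fun x y => Rf w x y) := by
  unfold Rf Ew Function.uncurry
  fun_prop (disch := intro p; exact (Ew_pos hw0 hw p.1 p.2).ne')

section pointwise

variable {w x y : ℝ} (hw0 : 0 < w) (hw : w < 1 / 2)
  (hx : x ∈ Set.Icc (0:ℝ) 1) (hy : y ∈ Set.Icc (0:ℝ) 1)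

lemma ab_sq_le_one (hx : x ∈ Set.Icc (0:ℝ) 1) (hy : y ∈ Set.Icc (0:ℝ) 1) :
    ((2 * x - 1) * (2 * y - 1)) ^ 2 ≤ 1 := by
  have hx2 := sq_2t1_le_one hx.1 hx.2
  have hy2 := sq_2t1_le_one hy.1 hy.2
  have h2y : (0:ℝ) ≤ (2 * y - 1) ^ 2 := sq_nonneg _
  calc ((2 * x - 1) * (2 * y - 1)) ^ 2 = (2 * x - 1) ^ 2 * (2 * y - 1) ^ 2 := by ring
    _ ≤ 1 := mul_le_one₀ hx2 h2y hy2

include hw0 hw hx hy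

lemma pw1 :
    x * (1 - x) * y * (1 - y) *
          ((2 * x - 1) *
              ((1 - w + w * (2 * y - 1)) / (2 * (1 - w + w * ((2 * x - 1) * (2 * y - 1))))
                - (1 - w + w * (1 - 2 * y)) / (2 * (1 - w + w * ((2 * x - 1) * (2 * y - 1)))))
            + (2 * y - 1) *
              ((1 - w + w * (1 - 2 * x)) / (2 * (1 - w + w * (-((2 * x - 1) * (2 * y - 1)))))
                - (1 - w + w * (2 * x - 1)) / (2 * (1 - w + w * (-((2 * x - 1) * (2 * y - 1)))))))
      = -(2 * w ^ 2) * Qf w x y := by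
  have hab := ab_sq_le_one hx hy
  have hab' : (-((2 * x - 1) * (2 * y - 1))) ^ 2 ≤ 1 := by rwa [neg_sq]
  have hD : (1 - w + w * ((2 * x - 1) * (2 * y - 1))) ≠ 0 := (D_pos hw0 hw hab).ne'
  have hD' : (1 - w - w * ((2 * x - 1) * (2 * y - 1))) ≠ 0 := by
    have := (D_pos hw0 hw hab').ne'
    intro h; apply this; linarith
  simp only [Qf, Ew, pj_eq hx, pj_eq hy]
  set a := 2 * x - 1 with ha
  set b := 2 * y - 1 with hb
  have h1 : 1 - w + w * (-(a * b)) = 1 - w - w * (a * b) := by ring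
  have h2 : (1 - w) ^ 2 - w ^ 2 * a ^ 2 * b ^ 2
      = (1 - w + w * (a * b)) * (1 - w - w * (a * b)) := by ring
  rw [h1, h2]
  set D := 1 - w + w * (a * b) with hDdef
  set D' := 1 - w - w * (a * b) with hD'def
  field_simp
  ring

lemma pw2 :
    x * (1 - x) * y * (1 - y) *
          ((1 - w + w * (2 * y - 1)) / (2 * (1 - w + w * ((2 * x - 1) * (2 * y - 1))))
            + (1 - w + w * (1 - 2 * y)) / (2 * (1 - w + w * ((2 * x - 1) * (2 * y - 1))))
            + (1 - w + w * (1 - 2 * x)) / (2 * (1 - w + w * (-((2 * x - 1) * (2 * y - 1)))))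
            + (1 - w + w * (2 * x - 1)) / (2 * (1 - w + w * (-((2 * x - 1) * (2 * y - 1))))))
      = (2 * (1 - w) ^ 2) * Rf w x y := by
  have hab := ab_sq_le_one hx hy
  have hab' : (-((2 * x - 1) * (2 * y - 1))) ^ 2 ≤ 1 := by rwa [neg_sq]
  have hD : (1 - w + w * ((2 * x - 1) * (2 * y - 1))) ≠ 0 := (D_pos hw0 hw hab).ne'
  have hD' : (1 - w - w * ((2 * x - 1) * (2 * y - 1))) ≠ 0 := by
    have := (D_pos hw0 hw hab').ne'
    intro h; apply this; linarith
  simp only [Rf, Ew, pj_eq hx, pj_eq hy]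
  set a := 2 * x - 1 with ha
  set b := 2 * y - 1 with hb
  have h1 : 1 - w + w * (-(a * b)) = 1 - w - w * (a * b) := by ring
  have h2 : (1 - w) ^ 2 - w ^ 2 * a ^ 2 * b ^ 2
      = (1 - w + w * (a * b)) * (1 - w - w * (a * b)) := by ring
  rw [h1, h2]
  set D := 1 - w + w * (a * b) with hDdef
  set D' := 1 - w - w * (a * b) with hD'def
  field_simp
  ring

lemma pw3 (N : ℝ) :
    x * (1 - x) * y * (1 - y) *
          (((1 - w) ^ 2 - N * w ^ 2 * (2 * x - 1) ^ 2 * (2 * y - 1) ^ 2)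
            / ((1 - w) ^ 2 - w ^ 2 * (2 * x - 1) ^ 2 * (2 * y - 1) ^ 2))
      = (1 - w) ^ 2 * Rf w x y - (N * w ^ 2) * Qf w x y := by
  have hE : Ew w x y ≠ 0 := (Ew_pos hw0 hw x y).ne'
  rw [Ew] at hE
  rw [pj_eq hx, pj_eq hy] at hE
  simp only [Qf, Rf, Ew, pj_eq hx, pj_eq hy]
  set a := 2 * x - 1 with ha
  set b := 2 * y - 1 with hb
  set E := (1 - w) ^ 2 - w ^ 2 * a ^ 2 * b ^ 2 with hEdef
  field_simp

end pointwise

/-- Exact average drift for the frequency-dependent Moran process in the Battle of the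
Sexes, 0 < w < 1/2:
⟨ΔH⟩ = (2/N²)∬ x(1-x)y(1-y)·[(1-w)² − Nw²(2x-1)²(2y-1)²]/[(1-w)² − w²(2x-1)²(2y-1)²]. -/
theorem moran_drift_exact (w N : ℝ) (hw0 : 0 < w) (hw : w < 1 / 2) (hN : 0 < N) :
    (1 / N) * (∫ x in (0:ℝ)..1, ∫ y in (0:ℝ)..1,
        x * (1 - x) * y * (1 - y) *
          ((2 * x - 1) *
              ((1 - w + w * (2 * y - 1)) / (2 * (1 - w + w * ((2 * x - 1) * (2 * y - 1))))
                - (1 - w + w * (1 - 2 * y)) / (2 * (1 - w + w * ((2 * x - 1) * (2 * y - 1)))))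
            + (2 * y - 1) *
              ((1 - w + w * (1 - 2 * x)) / (2 * (1 - w + w * (-((2 * x - 1) * (2 * y - 1)))))
                - (1 - w + w * (2 * x - 1)) / (2 * (1 - w + w * (-((2 * x - 1) * (2 * y - 1))))))))
    + (1 / N ^ 2) * (∫ x in (0:ℝ)..1, ∫ y in (0:ℝ)..1,
        x * (1 - x) * y * (1 - y) *
          ((1 - w + w * (2 * y - 1)) / (2 * (1 - w + w * ((2 * x - 1) * (2 * y - 1))))
            + (1 - w + w * (1 - 2 * y)) / (2 * (1 - w + w * ((2 * x - 1) * (2 * y - 1))))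
            + (1 - w + w * (1 - 2 * x)) / (2 * (1 - w + w * (-((2 * x - 1) * (2 * y - 1)))))
            + (1 - w + w * (2 * x - 1)) / (2 * (1 - w + w * (-((2 * x - 1) * (2 * y - 1)))))))
    = (2 / N ^ 2) * (∫ x in (0:ℝ)..1, ∫ y in (0:ℝ)..1,
        x * (1 - x) * y * (1 - y) *
          (((1 - w) ^ 2 - N * w ^ 2 * (2 * x - 1) ^ 2 * (2 * y - 1) ^ 2)
            / ((1 - w) ^ 2 - w ^ 2 * (2 * x - 1) ^ 2 * (2 * y - 1) ^ 2))) := by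
  have hIcc : Set.uIcc (0:ℝ) 1 = Set.Icc (0:ℝ) 1 := by
    rw [Set.uIcc_of_le]; norm_num
  have hQc := Qf_cont (w := w) hw0 hw
  have hRc := Rf_cont (w := w) hw0 hw
  -- integrability facts
  have hQy : ∀ x : ℝ, IntervalIntegrable (fun y => Qf w x y) MeasureTheory.volume 0 1 :=
    fun x => (hQc.comp (Continuous.prodMk_right x)).intervalIntegrable 0 1
  have hRy : ∀ x : ℝ, IntervalIntegrable (fun y => Rf w x y) MeasureTheory.volume 0 1 :=
    fun x => (hRc.comp (Continuous.prodMk_right x)).intervalIntegrable 0 1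
  have hQx : IntervalIntegrable (fun x => ∫ y in (0:ℝ)..1, Qf w x y) MeasureTheory.volume 0 1 :=
    (intervalIntegral.continuous_parametric_intervalIntegral_of_continuous' hQc 0 1).intervalIntegrable 0 1
  have hRx : IntervalIntegrable (fun x => ∫ y in (0:ℝ)..1, Rf w x y) MeasureTheory.volume 0 1 :=
    (intervalIntegral.continuous_parametric_intervalIntegral_of_continuous' hRc 0 1).intervalIntegrable 0 1
  have hA : (∫ x in (0:ℝ)..1, ∫ y in (0:ℝ)..1,
        x * (1 - x) * y * (1 - y) *
          ((2 * x - 1) *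
              ((1 - w + w * (2 * y - 1)) / (2 * (1 - w + w * ((2 * x - 1) * (2 * y - 1))))
                - (1 - w + w * (1 - 2 * y)) / (2 * (1 - w + w * ((2 * x - 1) * (2 * y - 1)))))
            + (2 * y - 1) *
              ((1 - w + w * (1 - 2 * x)) / (2 * (1 - w + w * (-((2 * x - 1) * (2 * y - 1)))))
                - (1 - w + w * (2 * x - 1)) / (2 * (1 - w + w * (-((2 * x - 1) * (2 * y - 1))))))))
      = -(2 * w ^ 2) * ∫ x in (0:ℝ)..1, ∫ y in (0:ℝ)..1, Qf w x y := by
    rw [← intervalIntegral.integral_const_mul]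
    apply intervalIntegral.integral_congr
    intro x hx
    rw [hIcc] at hx
    dsimp only
    rw [← intervalIntegral.integral_const_mul]
    apply intervalIntegral.integral_congr
    intro y hy
    rw [hIcc] at hy
    exact pw1 hw0 hw hx hy
  have hB : (∫ x in (0:ℝ)..1, ∫ y in (0:ℝ)..1,
        x * (1 - x) * y * (1 - y) *
          ((1 - w + w * (2 * y - 1)) / (2 * (1 - w + w * ((2 * x - 1) * (2 * y - 1))))
            + (1 - w + w * (1 - 2 * y)) / (2 * (1 - w + w * ((2 * x - 1) * (2 * y - 1))))
            + (1 - w + w * (1 - 2 * x)) / (2 * (1 - w + w * (-((2 * x - 1) * (2 * y - 1)))))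
            + (1 - w + w * (2 * x - 1)) / (2 * (1 - w + w * (-((2 * x - 1) * (2 * y - 1)))))))
      = (2 * (1 - w) ^ 2) * ∫ x in (0:ℝ)..1, ∫ y in (0:ℝ)..1, Rf w x y := by
    rw [← intervalIntegral.integral_const_mul]
    apply intervalIntegral.integral_congr
    intro x hx
    rw [hIcc] at hx
    dsimp only
    rw [← intervalIntegral.integral_const_mul]
    apply intervalIntegral.integral_congr
    intro y hy
    rw [hIcc] at hy
    exact pw2 hw0 hw hx hy
  have hC : (∫ x in (0:ℝ)..1, ∫ y in (0:ℝ)..1,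
        x * (1 - x) * y * (1 - y) *
          (((1 - w) ^ 2 - N * w ^ 2 * (2 * x - 1) ^ 2 * (2 * y - 1) ^ 2)
            / ((1 - w) ^ 2 - w ^ 2 * (2 * x - 1) ^ 2 * (2 * y - 1) ^ 2)))
      = (1 - w) ^ 2 * (∫ x in (0:ℝ)..1, ∫ y in (0:ℝ)..1, Rf w x y)
        - (N * w ^ 2) * (∫ x in (0:ℝ)..1, ∫ y in (0:ℝ)..1, Qf w x y) := by
    have step1 : (∫ x in (0:ℝ)..1, ∫ y in (0:ℝ)..1,
        x * (1 - x) * y * (1 - y) *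
          (((1 - w) ^ 2 - N * w ^ 2 * (2 * x - 1) ^ 2 * (2 * y - 1) ^ 2)
            / ((1 - w) ^ 2 - w ^ 2 * (2 * x - 1) ^ 2 * (2 * y - 1) ^ 2)))
        = ∫ x in (0:ℝ)..1, ((1 - w) ^ 2 * (∫ y in (0:ℝ)..1, Rf w x y)
            - (N * w ^ 2) * (∫ y in (0:ℝ)..1, Qf w x y)) := by
      apply intervalIntegral.integral_congr
      intro x hx
      rw [hIcc] at hx
      dsimp only
      rw [← intervalIntegral.integral_const_mul, ← intervalIntegral.integral_const_mul,
        ← intervalIntegral.integral_sub ((hRy x).const_mul _) ((hQy x).const_mul _)]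
      apply intervalIntegral.integral_congr
      intro y hy
      rw [hIcc] at hy
      exact pw3 hw0 hw hx hy N
    rw [step1, intervalIntegral.integral_sub ((hRx).const_mul _) ((hQx).const_mul _),
      intervalIntegral.integral_const_mul, intervalIntegral.integral_const_mul]
  rw [hA, hB, hC]
  have hN' : N ≠ 0 := hN.ne'
  field_simp
  ring
end

section
/- The function H(x,y) = -x(1-x)y(1-y) is a constant of motion for the Battle of the Sexes replicator dynamics ẋ = x(1-x)·2(2y-1), ẏ = -y(1-y)·2(2x-1): along any solution, d/dt H(x(t),y(t)) = 0. -/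
/-- H(x,y) = −x(1−x)y(1−y) is a constant of motion for the Battle of the Sexes
replicator dynamics ẋ = 2x(1−x)(2y−1), ẏ = −2y(1−y)(2x−1). -/
theorem H_constant_of_motion (x y : ℝ → ℝ)
    (hx : ∀ t : ℝ, HasDerivAt x (2 * x t * (1 - x t) * (2 * y t - 1)) t)
    (hy : ∀ t : ℝ, HasDerivAt y (-(2 * y t * (1 - y t) * (2 * x t - 1))) t) :
    ∀ t : ℝ, HasDerivAt (fun t => -(x t * (1 - x t) * y t * (1 - y t))) 0 t := by
  intro t
  have h := (((((hx t).mul ((hasDerivAt_const t (1:ℝ)).sub (hx t))).mul (hy t)).mul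
      ((hasDerivAt_const t (1:ℝ)).sub (hy t))).neg)
  convert h using 1
  · rfl
  · rfl
  · rfl
  · simp only [Pi.mul_apply, Pi.sub_apply]
    ring
end

section
/- For the adjusted replicator dynamics of the Battle of the Sexes, ẋ = 2x(1-x)(2y-1)/(c + (2x-1)(2y-1)), ẏ = -2y(1-y)(2x-1)/(c - (2x-1)(2y-1)) with c = (1-w)/w > 1, the time derivative of H(x,y) = -x(1-x)y(1-y) along trajectories in the open unit square satisfies dH/dt ≤ 0, with equality only when (2x-1)(2y-1) = 0. -/
/-- Along trajectories of the adjusted replicator dynamics of the Battle of the Sexes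
(with c = (1−w)/w > 1), dH/dt = ∂H/∂x·ẋ + ∂H/∂y·ẏ ≤ 0 in the open unit square,
with equality only when (2x−1)(2y−1) = 0. -/
theorem adjusted_replicator_H_decreases (c x y : ℝ) (hc : 1 < c)
    (hx : x ∈ Set.Ioo (0:ℝ) 1) (hy : y ∈ Set.Ioo (0:ℝ) 1) :
    ((2 * x - 1) * (y * (1 - y))) *
        (2 * x * (1 - x) * (2 * y - 1) / (c + (2 * x - 1) * (2 * y - 1)))
      + ((2 * y - 1) * (x * (1 - x))) *
        (-(2 * y * (1 - y) * (2 * x - 1)) / (c - (2 * x - 1) * (2 * y - 1))) ≤ 0 ∧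
    (((2 * x - 1) * (y * (1 - y))) *
        (2 * x * (1 - x) * (2 * y - 1) / (c + (2 * x - 1) * (2 * y - 1)))
      + ((2 * y - 1) * (x * (1 - x))) *
        (-(2 * y * (1 - y) * (2 * x - 1)) / (c - (2 * x - 1) * (2 * y - 1))) = 0 →
      (2 * x - 1) * (2 * y - 1) = 0) := by
  obtain ⟨hx0, hx1⟩ := hx
  obtain ⟨hy0, hy1⟩ := hy
  set u : ℝ := (2 * x - 1) * (2 * y - 1) with hu
  have huabs : |u| < 1 := by
    rw [hu, abs_mul]
    have h1 : |2 * x - 1| < 1 := abs_lt.2 ⟨by linarith, by linarith⟩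
    have h2 : |2 * y - 1| < 1 := abs_lt.2 ⟨by linarith, by linarith⟩
    calc |2 * x - 1| * |2 * y - 1| ≤ |2 * x - 1| * 1 :=
          mul_le_mul_of_nonneg_left h2.le (abs_nonneg _)
      _ < 1 := by simpa using h1
  obtain ⟨hul, hur⟩ := abs_lt.1 huabs
  have h1 : 0 < c + u := by linarith
  have h2 : 0 < c - u := by linarith
  have hP : 0 < x * (1 - x) * (y * (1 - y)) :=
    mul_pos (mul_pos hx0 (by linarith)) (mul_pos hy0 (by linarith))
  have key : ((2 * x - 1) * (y * (1 - y))) *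
        (2 * x * (1 - x) * (2 * y - 1) / (c + (2 * x - 1) * (2 * y - 1)))
      + ((2 * y - 1) * (x * (1 - x))) *
        (-(2 * y * (1 - y) * (2 * x - 1)) / (c - (2 * x - 1) * (2 * y - 1)))
      = -4 * u ^ 2 * (x * (1 - x) * (y * (1 - y))) / ((c + u) * (c - u)) := by
    rw [← hu]
    field_simp
    ring
  constructor
  · rw [key]
    apply div_nonpos_of_nonpos_of_nonneg
    · nlinarith [sq_nonneg u, hP]
    · positivity
  · intro h
    rw [key] at h
    have hden : ((c + u) * (c - u)) ≠ 0 := by positivity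
    have hnum : -4 * u ^ 2 * (x * (1 - x) * (y * (1 - y))) = 0 := by
      rcases (div_eq_zero_iff.1 h) with h' | h'
      · exact h'
      · exact absurd h' hden
    have : u ^ 2 = 0 := by nlinarith [sq_nonneg u]
    have : u = 0 := by
      have := pow_eq_zero_iff (n := 2) (by norm_num) |>.1 this
      exact this
    simpa [hu] using this
end
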